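/- Let α ∈ [0,1), μ(0)=0, and μ(k) the Sisyphus score of a reward sequence ρ with ρ(m) ∈ [0,1]. If the rewards are eventually constant, ρ(m) = ρ* for all m ≥ M, then μ(k) → ρ* as k → ∞. -/

import Mathlib

open Filter

/-- If the rewards are eventually constant equal to ρ*, the Sisyphus score
converges to ρ*. -/
theorem sisyphus_score_tracks (α : ℝ) (hα : α ∈ Set.Ico (0:ℝ) 1)
    (ρ μ : ℕ → ℝ) (hρ : ∀ m, ρ m ∈ Set.Icc (0:ℝ) 1)
    (ρstar : ℝ) (hρstar : ρstar ∈ Set.Icc (0:ℝ) 1)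
    (M : ℕ) (hconst : ∀ m, M ≤ m → ρ m = ρstar)
    (hμ0 : μ 0 = 0)
    (hrec : ∀ k, 1 ≤ k → μ k = (1 - α ^ (k - 1)) / (2 - α - α ^ k) * μ (k - 1)
        + (1 - α) / (2 - α - α ^ k) * ρ k) :
    Filter.Tendsto μ Filter.atTop (nhds ρstar) := by
  obtain ⟨hα0, hα1⟩ := hα
  obtain ⟨hρ0, hρ1⟩ := hρstar
  set N := max M 1 with hNdef
  have hN1 : 1 ≤ N := le_max_right _ _
  have hNM : M ≤ N := le_max_left _ _
  have h2α : (0:ℝ) < 2 - α := by linarith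
  set r : ℝ := max (1/(2-α)) α with hrdef
  have hr0 : 0 < r := lt_of_lt_of_le (by positivity) (le_max_left _ _)
  have hr1 : r < 1 := max_lt (by rw [div_lt_one h2α]; linarith) hα1
  have hrα : α ≤ r := le_max_right _ _
  set C : ℝ := |μ N - ρstar| with hCdef
  have key : ∀ n : ℕ, |μ (N + n) - ρstar| ≤ (C + n) * r ^ n := by
    intro n
    induction n with
    | zero => simp [hCdef]
    | succ n ih =>
      have hk1 : 1 ≤ N + n + 1 := by omega
      have hk1' : N + n + 1 - 1 = N + n := by omega
      have hρk : ρ (N + n + 1) = ρstar := hconst _ (by omega)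
      have hαk : α ^ (N + n + 1) ≤ α ^ (N + n) :=
        pow_le_pow_of_le_one hα0 hα1.le (by omega)
      have hαNn1 : α ^ (N + n) ≤ 1 := pow_le_one₀ hα0 hα1.le
      have hαkα : α ^ (N + n + 1) ≤ α := by
        calc α ^ (N + n + 1) ≤ α ^ 1 := pow_le_pow_of_le_one hα0 hα1.le (by omega)
        _ = α := pow_one α
      have hαk0 : 0 ≤ α ^ (N + n) := pow_nonneg hα0 _
      have hαk10 : 0 ≤ α ^ (N + n + 1) := pow_nonneg hα0 _
      set D : ℝ := 2 - α - α ^ (N + n + 1) with hDdef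
      have hD2 : 2 * (1 - α) ≤ D := by simp only [hDdef]; linarith
      have hDpos : 0 < D := by linarith
      have heq : μ (N + n + 1) - ρstar
          = (1 - α ^ (N + n)) / D * (μ (N + n) - ρstar)
            - (α ^ (N + n) - α ^ (N + n + 1)) / D * ρstar := by
        have h := hrec (N + n + 1) hk1
        rw [hk1', hρk] at h
        rw [h, ← hDdef]
        field_simp
        ring
      have ha0 : 0 ≤ (1 - α ^ (N + n)) / D := div_nonneg (by linarith) hDpos.le
      have har : (1 - α ^ (N + n)) / D ≤ r := by
        refine le_trans ?_ (le_max_left (1/(2-α)) α)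
        rw [div_le_div_iff₀ hDpos h2α]
        nlinarith [pow_succ α (N + n)]
      have hb0 : 0 ≤ (α ^ (N + n) - α ^ (N + n + 1)) / D := by
        apply div_nonneg _ hDpos.le; linarith
      have hterm2 : (α ^ (N + n) - α ^ (N + n + 1)) / D * ρstar ≤ r ^ (n + 1) := by
        have h1 : (α ^ (N + n) - α ^ (N + n + 1)) / D * ρstar ≤ α ^ (N + n) := by
          have : (α ^ (N + n) - α ^ (N + n + 1)) / D ≤ α ^ (N + n) := by
            rw [div_le_iff₀ hDpos]
            nlinarith
          calc (α ^ (N + n) - α ^ (N + n + 1)) / D * ρstar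
              ≤ (α ^ (N + n) - α ^ (N + n + 1)) / D * 1 := by
                apply mul_le_mul_of_nonneg_left hρ1 hb0
            _ = (α ^ (N + n) - α ^ (N + n + 1)) / D := mul_one _
            _ ≤ α ^ (N + n) := this
        have h2 : α ^ (N + n) ≤ r ^ (N + n) := pow_le_pow_left₀ hα0 hrα _
        have h3 : r ^ (N + n) ≤ r ^ (n + 1) :=
          pow_le_pow_of_le_one hr0.le hr1.le (by omega)
        linarith
      have habs : |μ (N + n + 1) - ρstar|
          ≤ (1 - α ^ (N + n)) / D * |μ (N + n) - ρstar|
            + (α ^ (N + n) - α ^ (N + n + 1)) / D * ρstar := by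
        rw [heq]
        calc |(1 - α ^ (N + n)) / D * (μ (N + n) - ρstar)
              - (α ^ (N + n) - α ^ (N + n + 1)) / D * ρstar|
            ≤ |(1 - α ^ (N + n)) / D * (μ (N + n) - ρstar)|
              + |(α ^ (N + n) - α ^ (N + n + 1)) / D * ρstar| := abs_sub _ _
          _ = (1 - α ^ (N + n)) / D * |μ (N + n) - ρstar|
              + (α ^ (N + n) - α ^ (N + n + 1)) / D * ρstar := by
              rw [abs_mul, abs_mul, abs_of_nonneg ha0, abs_of_nonneg hb0,
                abs_of_nonneg hρ0]
      have hCn0 : (0:ℝ) ≤ (C + n) * r ^ n := by positivity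
      have hmain : (1 - α ^ (N + n)) / D * |μ (N + n) - ρstar|
          ≤ r * ((C + n) * r ^ n) :=
        mul_le_mul har ih (abs_nonneg _) hr0.le
      have : |μ (N + n + 1) - ρstar| ≤ r * ((C + n) * r ^ n) + r ^ (n + 1) := by
        linarith
      calc |μ (N + n + 1) - ρstar| ≤ r * ((C + n) * r ^ n) + r ^ (n + 1) := this
        _ = (C + (n + 1 : ℕ)) * r ^ (n + 1) := by push_cast; ring
  have hg : Tendsto (fun n : ℕ => (C + n) * r ^ n) atTop (nhds 0) := by
    have h1 : Tendsto (fun n : ℕ => C * r ^ n) atTop (nhds 0) := by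
      simpa using (tendsto_pow_atTop_nhds_zero_of_lt_one hr0.le hr1).const_mul C
    have h2 : Tendsto (fun n : ℕ => (n : ℝ) * r ^ n) atTop (nhds 0) :=
      tendsto_self_mul_const_pow_of_lt_one hr0.le hr1
    have := h1.add h2
    simpa [add_mul] using this
  have hsub : Tendsto (fun k => μ k - ρstar) atTop (nhds 0) := by
    refine squeeze_zero_norm' ?_ (hg.comp (tendsto_sub_atTop_nat N))
    filter_upwards [eventually_ge_atTop N] with k hk
    have : N + (k - N) = k := by omega
    simpa [this] using key (k - N)
  have := hsub.add_const ρstar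
  simpa using this
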